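/- The Crank-Nicolson FEEC scheme conserves discrete mass: if (u_h^{n+1}, p_h^{n+1}) solves the midpoint system, then div_h u_h^{n+1} = div_h u_h^n. -/

import Mathlib

open RealInnerProductSpace

/-- the Crank-Nicolson FEEC scheme conserves discrete mass: if
`(u^{n+1}, p^{n+1})` solves the midpoint system, then `div_h u^{n+1} = div_h u^n`. -/
theorem stmt10 {V0 V1 V2 : Type*}
    [NormedAddCommGroup V0] [InnerProductSpace ℝ V0]
    [NormedAddCommGroup V1] [InnerProductSpace ℝ V1]
    [NormedAddCommGroup V2] [InnerProductSpace ℝ V2]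
    (divh : V1 →ₗ[ℝ] V2) (tgrad : V2 →ₗ[ℝ] V1) (tcurl : V1 →ₗ[ℝ] V0)
    (Pc : V1 →ₗ[ℝ] V1)
    (htg : ∀ (q : V2) (v : V1), ⟪tgrad q, v⟫ = -⟪q, divh v⟫)
    (htc0 : ∀ q : V2, tcurl (tgrad q) = 0)
    (hPc : ∀ q : V2, Pc (tgrad q) = tgrad q)
    (s : V1 → V1 → V1) (ν α Δt : ℝ) (hΔt : Δt ≠ 0)
    (un un1 : V1) (p : V2)
    (hmom : ∀ v : V1,
      ⟪Δt⁻¹ • (un1 - un), v⟫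
        + ⟪(1 / 2 : ℝ) • (un1 + un), s ((1 / 2 : ℝ) • (un1 + un)) v⟫
        + ⟪tgrad p, v⟫
        + ν * ⟪tcurl ((1 / 2 : ℝ) • (un1 + un)), tcurl v⟫
        + α * ⟪(1 / 2 : ℝ) • (un1 + un) - Pc ((1 / 2 : ℝ) • (un1 + un)), v - Pc v⟫
        = 0)
    (hpres : ∀ q : V2,
      ⟪(1 / 2 : ℝ) • (un1 + un), s ((1 / 2 : ℝ) • (un1 + un)) (tgrad q)⟫
        + ⟪tgrad p, tgrad q⟫ = 0) :
    divh un1 = divh un := by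
  have key : ∀ q : V2, ⟪q, divh (un1 - un)⟫ = 0 := by
    intro q
    have h1 := hmom (tgrad q)
    have h2 := hpres q
    have h3 : tcurl (tgrad q) = 0 := htc0 q
    have h4 : tgrad q - Pc (tgrad q) = 0 := by rw [hPc]; simp
    rw [h3, h4] at h1
    simp only [inner_zero_right, mul_zero, add_zero] at h1
    have h5 : ⟪Δt⁻¹ • (un1 - un), tgrad q⟫ = 0 := by linarith
    rw [real_inner_smul_left] at h5
    have h6 : ⟪un1 - un, tgrad q⟫ = 0 := by
      have := inv_ne_zero hΔt
      field_simp at h5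
      rwa [mul_zero] at h5
    have h7 := htg q (un1 - un)
    rw [real_inner_comm] at h6
    rw [h6] at h7
    linarith
  have h0 : divh (un1 - un) = 0 := by
    have := key (divh (un1 - un))
    exact inner_self_eq_zero.mp this
  rw [map_sub, sub_eq_zero] at h0
  exact h0
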